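/- Let f_{θ'}(θ) be a bifunction on Θ × Θ with Θ ⊆ ℝ^d convex, such that f_{θ'}(·) is α-strongly convex (in the sense ⟨∇f_{θ'}(θ₁) - ∇f_{θ'}(θ₂), θ₁ - θ₂⟩ ≥ α‖θ₁-θ₂‖²) and ∇f_{·}(θ) is β-Lipschitz in the first argument. If α > β, then the map F(θ) := ∇f_θ(θ) is (α - β)-strongly monotone on Θ: ⟨F(θ) - F(θ'), θ - θ'⟩ ≥ (α - β)‖θ - θ'‖² for all θ, θ' ∈ Θ. -/

import Mathlib

/-- The diagonal gradient map F(θ) = ∇f_θ(θ) of the bifunction is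
(α - β)-strongly monotone on Θ when α > β. -/
theorem diagonal_map_strongly_monotone {d : ℕ}
    (Θ : Set (EuclideanSpace ℝ (Fin d))) (hconv : Convex ℝ Θ)
    (g : EuclideanSpace ℝ (Fin d) → EuclideanSpace ℝ (Fin d) → EuclideanSpace ℝ (Fin d))
    (α β : ℝ) (hβ : 0 ≤ β) (hαβ : β < α)
    (hsc : ∀ p ∈ Θ, ∀ x ∈ Θ, ∀ y ∈ Θ,
      (inner ℝ (g p x - g p y) (x - y) : ℝ) ≥ α * ‖x - y‖ ^ 2)
    (hlip : ∀ p₁ ∈ Θ, ∀ p₂ ∈ Θ, ∀ x ∈ Θ, ‖g p₁ x - g p₂ x‖ ≤ β * ‖p₁ - p₂‖) :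
    ∀ θ ∈ Θ, ∀ θ' ∈ Θ,
      (inner ℝ (g θ θ - g θ' θ') (θ - θ') : ℝ) ≥ (α - β) * ‖θ - θ'‖ ^ 2 := by
  intro θ hθ θ' hθ'
  have h1 := hsc θ hθ θ hθ θ' hθ'
  have h2 : (inner ℝ (g θ θ' - g θ' θ') (θ - θ') : ℝ) ≥ -(β * ‖θ - θ'‖ ^ 2) := by
    have hcs := abs_real_inner_le_norm (g θ θ' - g θ' θ') (θ - θ')
    have hl := hlip θ hθ θ' hθ' θ' hθ'
    have : |(inner ℝ (g θ θ' - g θ' θ') (θ - θ') : ℝ)| ≤ β * ‖θ - θ'‖ ^ 2 := by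
      calc |(inner ℝ (g θ θ' - g θ' θ') (θ - θ') : ℝ)| ≤ ‖g θ θ' - g θ' θ'‖ * ‖θ - θ'‖ := hcs
        _ ≤ β * ‖θ - θ'‖ * ‖θ - θ'‖ :=
          mul_le_mul_of_nonneg_right hl (norm_nonneg _)
        _ = β * ‖θ - θ'‖ ^ 2 := by ring
    linarith [neg_abs_le (inner ℝ (g θ θ' - g θ' θ') (θ - θ') : ℝ)]
  have key : (inner ℝ (g θ θ - g θ' θ') (θ - θ') : ℝ)
      = inner ℝ (g θ θ - g θ θ') (θ - θ') + inner ℝ (g θ θ' - g θ' θ') (θ - θ') := by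
    rw [← inner_add_left]; congr 1; abel
  rw [key]; nlinarith [sq_nonneg ‖θ - θ'‖]
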